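/- Let A ∈ ℂ^(L×L) be Hermitian positive semidefinite and B ∈ ℂ^(L×K). For λ > 0 define V(λ) = (A + λI)⁻¹B and P(λ) = Tr(V(λ)V(λ)ᴴ) = ‖(A+λI)⁻¹B‖_F². Then P is monotonically nonincreasing on (0,∞). -/
import Mathlib

open Matrix
open scoped ComplexOrder

theorem precoder_power_antitone (L K : ℕ)
    (A : Matrix (Fin L) (Fin L) ℂ) (hA : A.PosSemidef)
    (B : Matrix (Fin L) (Fin K) ℂ)
    (P : ℝ → ℝ)
    (hP : ∀ lam : ℝ, P lam = (Matrix.trace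
      (((A + lam • (1 : Matrix (Fin L) (Fin L) ℂ))⁻¹ * B) *
       ((A + lam • (1 : Matrix (Fin L) (Fin L) ℂ))⁻¹ * B)ᴴ)).re) :
    AntitoneOn P (Set.Ioi (0:ℝ)) := by
  have hH := hA.1
  set U : Matrix (Fin L) (Fin L) ℂ := (hH.eigenvectorUnitary : Matrix (Fin L) (Fin L) ℂ)
    with hUdef
  set d : Fin L → ℝ := hH.eigenvalues with hddef
  have hd0 : ∀ i, 0 ≤ d i := fun i => hA.eigenvalues_nonneg i
  have hUU : star U * U = 1 := Matrix.mem_unitaryGroup_iff'.mp hH.eigenvectorUnitary.2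
  have hUU' : U * star U = 1 := Matrix.mem_unitaryGroup_iff.mp hH.eigenvectorUnitary.2
  set C : Matrix (Fin L) (Fin K) ℂ := star U * B with hCdef
  have hA' : A = U * Matrix.diagonal (fun i => ((d i : ℝ) : ℂ)) * star U := by
    rw [hUdef, hddef]
    exact hH.spectral_theorem
  have key : ∀ lam : ℝ, 0 < lam →
      P lam = ∑ i, ∑ j, Complex.normSq (C i j) * ((d i + lam)⁻¹) ^ 2 := by
    intro lam hlam
    have hpos : ∀ i, 0 < d i + lam := fun i => add_pos_of_nonneg_of_pos (hd0 i) hlam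
    set D : Matrix (Fin L) (Fin L) ℂ :=
      Matrix.diagonal (fun i => ((d i + lam : ℝ) : ℂ)) with hDdef
    set D' : Matrix (Fin L) (Fin L) ℂ :=
      Matrix.diagonal (fun i => (((d i + lam)⁻¹ : ℝ) : ℂ)) with hD'def
    have hDD' : D * D' = 1 := by
      rw [hDdef, hD'def, Matrix.diagonal_mul_diagonal]
      have h1' : ∀ i : Fin L, ((d i + lam : ℝ) : ℂ) * (((d i + lam)⁻¹ : ℝ) : ℂ) = 1 := by
        intro i
        rw [← Complex.ofReal_mul, mul_inv_cancel₀ (hpos i).ne', Complex.ofReal_one]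
      simp only [h1', Matrix.diagonal_one]
    have hsm : lam • (1 : Matrix (Fin L) (Fin L) ℂ) =
        U * (Matrix.diagonal fun _ : Fin L => (lam : ℂ)) * star U := by
      have h2' : (Matrix.diagonal fun _ : Fin L => (lam : ℂ)) =
          lam • (1 : Matrix (Fin L) (Fin L) ℂ) := by
        ext i j
        by_cases h : i = j <;>
          simp [Matrix.diagonal, Matrix.one_apply, h, Complex.real_smul]
      rw [h2', Matrix.mul_smul, Matrix.smul_mul, mul_one, hUU']
    have hD : D = Matrix.diagonal (fun i => ((d i : ℝ) : ℂ)) +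
        Matrix.diagonal fun _ : Fin L => (lam : ℂ) := by
      rw [hDdef, Matrix.diagonal_add]
      refine congrArg Matrix.diagonal (funext fun i => ?_)
      push_cast
      ring
    have h1 : A + lam • (1 : Matrix (Fin L) (Fin L) ℂ) = U * D * star U := by
      conv_lhs => rw [hA', hsm]
      rw [hD, Matrix.mul_add, Matrix.add_mul]
    have h2 : (A + lam • (1 : Matrix (Fin L) (Fin L) ℂ))⁻¹ = U * D' * star U := by
      apply Matrix.inv_eq_right_inv
      rw [h1]
      have e1 : U * D * star U * (U * D' * star U) =
          U * D * (star U * U * (D' * star U)) := by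
        simp only [Matrix.mul_assoc]
      rw [e1, hUU, Matrix.one_mul]
      have e2 : U * D * (D' * star U) = U * (D * D') * star U := by
        simp only [Matrix.mul_assoc]
      rw [e2, hDD', Matrix.mul_one, hUU']
    have hX : (A + lam • (1 : Matrix (Fin L) (Fin L) ℂ))⁻¹ * B = U * (D' * C) := by
      rw [h2, hCdef]
      simp only [Matrix.mul_assoc]
    have htr : Matrix.trace
        (((A + lam • (1 : Matrix (Fin L) (Fin L) ℂ))⁻¹ * B) *
         ((A + lam • (1 : Matrix (Fin L) (Fin L) ℂ))⁻¹ * B)ᴴ)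
        = Matrix.trace ((D' * C) * (D' * C)ᴴ) := by
      rw [hX, Matrix.conjTranspose_mul]
      have e1 : U * (D' * C) * ((D' * C)ᴴ * Uᴴ) = U * ((D' * C) * ((D' * C)ᴴ * Uᴴ)) := by
        simp only [Matrix.mul_assoc]
      rw [e1, Matrix.trace_mul_comm]
      have e2 : (D' * C) * ((D' * C)ᴴ * Uᴴ) * U = (D' * C) * (D' * C)ᴴ * (Uᴴ * U) := by
        simp only [Matrix.mul_assoc]
      rw [e2, ← Matrix.star_eq_conjTranspose, hUU, Matrix.mul_one]
    rw [hP lam, htr]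
    have hentry : ∀ i j, (D' * C) i j = (((d i + lam)⁻¹ : ℝ) : ℂ) * C i j := by
      intro i j
      rw [hD'def, Matrix.diagonal_mul]
    rw [Matrix.trace, Complex.re_sum]
    apply Finset.sum_congr rfl
    intro i _
    rw [Matrix.diag_apply, Matrix.mul_apply, Complex.re_sum]
    apply Finset.sum_congr rfl
    intro j _
    rw [Matrix.conjTranspose_apply, hentry i j, star_mul', Complex.star_def,
      Complex.conj_ofReal]
    have hterm : (((d i + lam)⁻¹ : ℝ) : ℂ) * C i j *
        ((((d i + lam)⁻¹ : ℝ) : ℂ) * (starRingEnd ℂ) (C i j))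
        = ((Complex.normSq (C i j) * ((d i + lam)⁻¹) ^ 2 : ℝ) : ℂ) := by
      push_cast
      rw [← Complex.mul_conj]
      ring
    rw [hterm, Complex.ofReal_re]
  intro a ha b hb hab
  rw [key a ha, key b hb]
  apply Finset.sum_le_sum
  intro i _
  apply Finset.sum_le_sum
  intro j _
  apply mul_le_mul_of_nonneg_left _ (Complex.normSq_nonneg _)
  have hai : 0 < d i + a := add_pos_of_nonneg_of_pos (hd0 i) ha
  have hbi : 0 < d i + b := add_pos_of_nonneg_of_pos (hd0 i) hb
  apply pow_le_pow_left₀ (by positivity)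
  exact inv_anti₀ hai (by linarith)
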